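/- For every real a and every natural number m, the integral over ℝ of v^{2m} exp(-iav - v²/2) dv equals (√(2π) (2m)! / 2^m) exp(-a²/2) Σ_{k=0}^m (-1)^k (2a²)^k / ((2k)! (m-k)!). -/

import Mathlib

open MeasureTheory Real Finset
open scoped Nat FourierTransform

-- ℕ: (2n-1)‼ * (2^n * n!) = (2n)!
lemma dfac_fact (n : ℕ) : (2 * n - 1)‼ * (2 ^ n * n.factorial) = (2 * n).factorial := by
  induction n with
  | zero => simp
  | succ n _ =>
    have h1 : 2 * (n + 1) = (2 * n + 1) + 1 := by ring
    have h2 : 2 * (n + 1) - 1 = 2 * n + 1 := by omega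
    rw [h2, h1, Nat.factorial_eq_mul_doubleFactorial (2 * n + 1)]
    rw [(by ring : 2 * n + 1 + 1 = 2 * (n + 1)), Nat.doubleFactorial_two_mul]
    ring

-- even-reindex of sums
lemma sum_even_reindex {M : Type*} [AddCommMonoid M] (g : ℕ → M) (m : ℕ)
    (h : ∀ j, Odd j → g j = 0) :
    ∑ j ∈ Finset.range (2 * m + 1), g j = ∑ k ∈ Finset.range (m + 1), g (2 * k) := by
  induction m with
  | zero => simp
  | succ m ih =>
    have : 2 * (m + 1) + 1 = (2 * m + 1) + 1 + 1 := by ring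
    rw [this, Finset.sum_range_succ, Finset.sum_range_succ, ih, h (2 * m + 1) ⟨m, by ring⟩,
      Finset.sum_range_succ]
    rw [Finset.sum_range_succ, Finset.sum_range_succ]
    simp [(by ring : 2 * m + 1 + 1 = 2 * (m + 1))]

-- choose identity in ℕ
lemma nat_core (m k : ℕ) (hk : k ≤ m) :
    (2 * (m - k) - 1)‼ * Nat.choose (2 * m) (2 * k) * (2 ^ (m - k) * (2 * k).factorial * (m - k).factorial)
      = (2 * m).factorial := by
  have h1 : (2 * (m - k) - 1)‼ * (2 ^ (m - k) * (m - k).factorial) = (2 * (m - k)).factorial :=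
    dfac_fact (m - k)
  have h2 : 2 * (m - k) = 2 * m - 2 * k := by omega
  have h3 : Nat.choose (2 * m) (2 * k) * (2 * k).factorial * (2 * m - 2 * k).factorial
      = (2 * m).factorial := Nat.choose_mul_factorial_mul_factorial (by omega)
  calc (2 * (m - k) - 1)‼ * Nat.choose (2 * m) (2 * k) *
        (2 ^ (m - k) * (2 * k).factorial * (m - k).factorial)
      = Nat.choose (2 * m) (2 * k) * (2 * k).factorial *
        ((2 * (m - k) - 1)‼ * (2 ^ (m - k) * (m - k).factorial)) := by ring
    _ = Nat.choose (2 * m) (2 * k) * (2 * k).factorial * (2 * m - 2 * k).factorial := by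
        rw [h1, h2]
    _ = (2 * m).factorial := by rw [← h3]

lemma hermite_sum (a : ℝ) (m : ℕ) :
    (-1 : ℝ) ^ m * (Polynomial.aeval a (Polynomial.hermite (2 * m))) =
    ((2 * m).factorial / 2 ^ m : ℝ) *
      ∑ k ∈ Finset.range (m + 1), (-1 : ℝ) ^ k * (2 * a ^ 2) ^ k /
        ((2 * k).factorial * (m - k).factorial) := by
  have h1 : Polynomial.aeval a (Polynomial.hermite (2 * m))
      = ∑ j ∈ Finset.range (2 * m + 1), ((Polynomial.hermite (2 * m)).coeff j : ℝ) * a ^ j := by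
    rw [Polynomial.aeval_eq_sum_range]
    simp [Polynomial.natDegree_hermite, zsmul_eq_mul]
  rw [h1, Finset.mul_sum, sum_even_reindex (fun j => (-1:ℝ)^m * (((Polynomial.hermite (2*m)).coeff j : ℝ) * a ^ j)) m
    (by
      intro j hj
      have hodd : Odd (2*m + j) := by rcases hj with ⟨t, rfl⟩; exact ⟨m + t, by ring⟩
      simp [Polynomial.coeff_hermite_of_odd_add hodd]), Finset.mul_sum]
  refine Finset.sum_congr rfl fun k hk => ?_
  have hkm : k ≤ m := by simpa using Nat.lt_succ_iff.mp (Finset.mem_range.mp hk)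
  have hco : (Polynomial.hermite (2*m)).coeff (2*k)
      = (-1)^(m-k) * (2*(m-k)-1)‼ * Nat.choose (2*m) (2*k) := by
    have := Polynomial.coeff_hermite_explicit (m-k) (2*k)
    rwa [show 2*(m-k)+2*k = 2*m by omega] at this
  have key : (((2*(m-k)-1)‼ : ℝ)) * (Nat.choose (2*m) (2*k)) * (2^(m-k) * (2*k).factorial * (m-k).factorial) = (2*m).factorial := by
    exact_mod_cast congrArg (Nat.cast : ℕ → ℝ) (nat_core m k hkm)
  have hsign : (-1:ℝ)^m * (-1:ℝ)^(m-k) = (-1)^k := by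
    rw [← pow_add, show m + (m-k) = 2*(m-k)+k by omega, pow_add, pow_mul]
    norm_num
  have hp : (2:ℝ)^m = 2^(m-k)*2^k := by rw [← pow_add]; congr 1; omega
  have e1 : ((2*k).factorial : ℝ) ≠ 0 := by positivity
  have e2 : ((m-k).factorial : ℝ) ≠ 0 := by positivity
  have e3 : (2:ℝ)^(m-k) ≠ 0 := by positivity
  have e4 : (2:ℝ)^k ≠ 0 := by positivity
  rw [hco]
  push_cast
  rw [← key, hp]
  field_simp
  linear_combination ((2 * m).choose (2 * k) : ℝ) * a ^ (k * 2) * 2 ^ k * hsign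

lemma gauss_int (n : ℕ) :
    Integrable (fun v : ℝ => v ^ n • Complex.exp (-(v:ℂ)^2/2)) := by
  have hcont : Continuous (fun v : ℝ => v ^ n • Complex.exp (-(v:ℂ)^2/2)) := by
    fun_prop
  refine Integrable.mono' (g := fun v : ℝ =>
      (n.factorial * Real.exp 1) * Real.exp (-(1/4 : ℝ) * v ^ 2)) ?_ hcont.aestronglyMeasurable ?_
  · exact (integrable_exp_neg_mul_sq (by norm_num)).const_mul _
  · refine Filter.Eventually.of_forall fun v => ?_
    have hnorm : ‖(v:ℝ) ^ n • Complex.exp (-(v:ℂ)^2/2)‖ = |v| ^ n * Real.exp (-(v^2/2)) := by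
      rw [norm_smul, Complex.norm_exp]
      simp only [Real.norm_eq_abs, abs_pow]
      congr 2
      have : ((-(v:ℂ)^2/2)).re = -(v^2/2) := by
        simp [Complex.div_re, pow_two]
        ring
      rw [this]
    rw [hnorm]
    have h1 : |v| ^ n ≤ n.factorial * Real.exp |v| := by
      have h2 : |v| ^ n / n.factorial ≤ Real.exp |v| := by
        calc |v| ^ n / n.factorial ≤ ∑ i ∈ Finset.range (n+1), |v| ^ i / i.factorial := by
              exact Finset.single_le_sum (f := fun i => |v| ^ i / (i.factorial : ℝ))
                (fun i _ => by positivity) (Finset.self_mem_range_succ n)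
          _ ≤ Real.exp |v| := Real.sum_le_exp_of_nonneg (abs_nonneg v) (n+1)
      have hfac : (0:ℝ) < n.factorial := by positivity
      calc |v| ^ n = n.factorial * (|v| ^ n / n.factorial) := by field_simp
        _ ≤ n.factorial * Real.exp |v| := by
            exact mul_le_mul_of_nonneg_left h2 hfac.le
    have h3 : Real.exp |v| * Real.exp (-(v^2/2)) ≤ Real.exp 1 * Real.exp (-(1/4:ℝ) * v^2) := by
      rw [← Real.exp_add, ← Real.exp_add]
      apply Real.exp_le_exp.mpr
      have : |v| ≤ 1 + v^2/4 := by nlinarith [sq_nonneg (|v| - 2), sq_abs v]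
      nlinarith [sq_abs v]
    calc |v| ^ n * Real.exp (-(v^2/2))
        ≤ (n.factorial * Real.exp |v|) * Real.exp (-(v^2/2)) := by
          exact mul_le_mul_of_nonneg_right h1 (Real.exp_nonneg _)
      _ = n.factorial * (Real.exp |v| * Real.exp (-(v^2/2))) := by ring
      _ ≤ n.factorial * (Real.exp 1 * Real.exp (-(1/4:ℝ) * v^2)) := by
          exact mul_le_mul_of_nonneg_left h3 (by positivity)
      _ = (n.factorial * Real.exp 1) * Real.exp (-(1/4:ℝ) * v^2) := by ring

lemma iteratedDeriv_ofReal (g : ℝ → ℝ) (hg : ContDiff ℝ ⊤ g) (n : ℕ) :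
    iteratedDeriv n (fun x => ((g x : ℝ) : ℂ)) = fun x => ((iteratedDeriv n g x : ℝ) : ℂ) := by
  induction n with
  | zero => simp
  | succ n ih =>
    rw [iteratedDeriv_succ, ih, iteratedDeriv_succ]
    funext x
    have hd : DifferentiableAt ℝ (iteratedDeriv n g) x :=
      (hg.differentiable_iteratedDeriv n (by exact_mod_cast lt_top_iff_ne_top.mpr (by simp))).differentiableAt
    exact (hd.hasDerivAt.ofReal_comp).deriv

lemma iteratedDeriv_cmul (c : ℝ) (e : ℝ → ℝ) (he : ContDiff ℝ ⊤ e) (n : ℕ) :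
    iteratedDeriv n (fun x => c * e x) = fun x => c * iteratedDeriv n e x := by
  induction n with
  | zero => simp
  | succ n ih =>
    rw [iteratedDeriv_succ, ih, iteratedDeriv_succ]
    funext x
    exact deriv_const_mul c
      ((he.differentiable_iteratedDeriv n (by exact_mod_cast lt_top_iff_ne_top.mpr (by simp))).differentiableAt)

theorem gaussian_even_moment_integral (a : ℝ) (m : ℕ) :
    ∫ v : ℝ, (v : ℂ) ^ (2 * m) * Complex.exp (-(a * v : ℝ) * Complex.I - (v : ℂ) ^ 2 / 2)
      = (Real.sqrt (2 * Real.pi) * (2 * m).factorial / 2 ^ m : ℝ) *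
        Complex.exp (-(a : ℂ) ^ 2 / 2) *
        ∑ k ∈ Finset.range (m + 1),
          (-1 : ℂ) ^ k * ((2 * a ^ 2 : ℝ) : ℂ) ^ k /
            (((2 * k).factorial : ℂ) * ((m - k).factorial : ℂ)) := by
  have hπ : (0:ℝ) < π := Real.pi_pos
  have hπc : (π:ℂ) ≠ 0 := by exact_mod_cast hπ.ne'
  set f : ℝ → ℂ := fun v => Complex.exp (-(v:ℂ)^2/2) with hf_def
  set G : ℝ → ℝ := fun x => Real.sqrt (2*π) * Real.exp (-(x^2/2)) with hG_def
  -- Fourier transform of the gaussian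
  have hfeq : f = fun x : ℝ => Complex.exp (-(π:ℂ) * (((2*π)⁻¹ : ℝ) : ℂ) * (x:ℂ)^2
      + 2*(π:ℂ)*(0:ℂ)*(x:ℂ)) := by
    funext x
    show Complex.exp (-(x:ℂ)^2/2) = _
    congr 1
    push_cast
    field_simp
    ring
  have hbre : 0 < ((((2*π)⁻¹ : ℝ) : ℂ)).re := by
    rw [Complex.ofReal_re]; positivity
  have hF : 𝓕 f = fun t : ℝ => ((G (2*π*t) : ℝ) : ℂ) := by
    rw [hfeq, fourier_gaussian_pi' hbre 0]
    funext t
    have h1 : ((((2*π)⁻¹ : ℝ) : ℂ)) ^ ((1:ℂ)/2) = ((((2*π)⁻¹ ^ ((1:ℝ)/2) : ℝ)) : ℂ) := by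
      rw [show ((1:ℂ)/2) = (((1:ℝ)/2 : ℝ) : ℂ) by norm_num,
        ← Complex.ofReal_cpow (by positivity)]
    have h2 : ((2*π)⁻¹ ^ ((1:ℝ)/2) : ℝ) = (Real.sqrt (2*π))⁻¹ := by
      rw [Real.inv_rpow (by positivity), ← Real.sqrt_eq_rpow]
    have h3 : -(π:ℂ) / (((2*π)⁻¹ : ℝ) : ℂ) * ((t:ℂ) + Complex.I*0)^2
        = ((-((2*π*t)^2/2) : ℝ) : ℂ) := by
      push_cast
      field_simp
      ring
    rw [h1, h2, h3, hG_def]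
    push_cast
    rw [one_div, inv_inv]
  -- derivative formula
  have key := Real.iteratedDeriv_fourier (f := f) (N := ⊤) (n := 2*m)
    (fun n _ => gauss_int n) le_top
  set t0 : ℝ := a / (2*π) with ht0
  have h2πt0 : 2*π*t0 = a := by
    rw [ht0]; field_simp
  -- left side of key at t0
  have hGsmooth : ContDiff ℝ ⊤ (fun x : ℝ => Real.exp (-(x^2/2))) :=
    Real.contDiff_exp.comp (((contDiff_id.pow 2).div_const 2).neg)
  have hGc : ContDiff ℝ ⊤ G := contDiff_const.mul hGsmooth
  have hψ : ContDiff ℝ ⊤ (fun x : ℝ => ((G x : ℝ) : ℂ)) :=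
    Complex.ofRealCLM.contDiff.comp hGc
  have hL : iteratedDeriv (2*m) (𝓕 f) t0
      = (((2*π)^(2*m) : ℝ)) • (((Real.sqrt (2*π) *
          ((-1:ℝ)^(2*m) * Polynomial.aeval a (Polynomial.hermite (2*m)) *
            Real.exp (-(a^2/2))) : ℝ)) : ℂ) := by
    have hstep1 : iteratedDeriv (2*m) (fun t : ℝ => ((G (2*π*t) : ℝ) : ℂ)) t0
        = (2*π)^(2*m) • iteratedDeriv (2*m) (fun x : ℝ => ((G x : ℝ):ℂ)) (2*π*t0) :=
      congrFun (iteratedDeriv_comp_const_smul (hψ.of_le le_top) (2*π)) t0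
    rw [hF, hstep1, h2πt0]
    simp only [iteratedDeriv_ofReal G hGc (2*m)]
    simp only [hG_def,
      iteratedDeriv_cmul (Real.sqrt (2*π)) _ hGsmooth (2*m), iteratedDeriv_eq_iterate]
    rw [Polynomial.deriv_gaussian_eq_hermite_mul_gaussian (2*m) a]
  -- right side of key at t0
  set c : ℂ := (((-1:ℝ)^m * (2*π)^(2*m) : ℝ) : ℂ) with hc_def
  have hR : (𝓕 fun x : ℝ => ((-2*(π:ℂ)*Complex.I*(x:ℂ))^(2*m)) • f x) t0
      = c * ∫ v : ℝ, (v:ℂ)^(2*m) * Complex.exp (-(a*v:ℝ)*Complex.I - (v:ℂ)^2/2) := by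
    rw [Real.fourier_real_eq_integral_exp_smul]
    rw [show (c * ∫ v : ℝ, (v:ℂ)^(2*m) * Complex.exp (-(a*v:ℝ)*Complex.I - (v:ℂ)^2/2))
        = ∫ v : ℝ, c • ((v:ℂ)^(2*m) * Complex.exp (-(a*v:ℝ)*Complex.I - (v:ℂ)^2/2))
        from (integral_smul c _).symm]
    refine integral_congr_ae (Filter.Eventually.of_forall fun v => ?_)
    dsimp only
    have harg : (-2*π*v*t0 : ℝ) = -(a*v) := by
      rw [ht0]; field_simp
    have hsq : (-2*(π:ℂ)*Complex.I*(v:ℂ))^2 = -((((2*π:ℝ)):ℂ)^2 * (v:ℂ)^2) := by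
      have hI := Complex.I_sq
      push_cast
      linear_combination (4*(π:ℂ)^2*(v:ℂ)^2) * hI
    have hpow : (-2*(π:ℂ)*Complex.I*(v:ℂ))^(2*m) = c * (v:ℂ)^(2*m) := by
      rw [pow_mul, hsq, neg_pow, mul_pow, ← pow_mul, ← pow_mul, hc_def]
      push_cast
      ring
    simp only [hf_def]
    rw [smul_eq_mul, smul_eq_mul, smul_eq_mul, harg, hpow, sub_eq_add_neg, Complex.exp_add]
    push_cast
    ring_nf
  -- combine
  have hcne : c ≠ 0 := by
    rw [hc_def]
    simp only [ne_eq, Complex.ofReal_eq_zero]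
    positivity
  apply mul_left_cancel₀ hcne
  rw [← hR, ← congrFun key t0, hL]
  -- final algebra
  have hexp : Complex.exp (-(a:ℂ)^2/2) = ((Real.exp (-(a^2/2)) : ℝ) : ℂ) := by
    rw [Complex.ofReal_exp]
    congr 1
    push_cast
    ring
  have hsum : (∑ k ∈ Finset.range (m + 1),
        (-1 : ℂ) ^ k * ((2 * a ^ 2 : ℝ) : ℂ) ^ k /
          (((2 * k).factorial : ℂ) * ((m - k).factorial : ℂ)))
      = (((∑ k ∈ Finset.range (m + 1), (-1:ℝ)^k * (2*a^2)^k /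
          ((2*k).factorial * (m-k).factorial)) : ℝ) : ℂ) := by
    push_cast
    rfl
  rw [hexp, hsum, hc_def, Complex.real_smul, ← Complex.ofReal_mul, ← Complex.ofReal_mul,
    ← Complex.ofReal_mul, ← Complex.ofReal_mul, Complex.ofReal_inj]
  have hs := hermite_sum a m
  linear_combination ((2*π)^(2*m) * Real.sqrt (2*π) * Real.exp (-(a^2/2)) * (-1:ℝ)^m) * hs
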